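/- Suppose real numbers μ, a_1, …, a_14 are such that the 8 × 8 symmetric matrix G(μ, a_1, …, a_14) has rank at most 3, 0.6 ≤ μ ≤ 0.64759, and |a_j| < μ for all 1 ≤ j ≤ 14. Then a_12 = a_6 and a_8 < 0. -/

import Mathlib

/-- The `8 × 8` symmetric matrix `G(μ, a₁, …, a₁₄)` from the paper. -/
def packingGram (μ a1 a2 a3 a4 a5 a6 a7 a8 a9 a10 a11 a12 a13 a14 : ℝ) :
    Matrix (Fin 8) (Fin 8) ℝ :=
  !![1,  a1,  μ,  a2,  a3, -μ,  a4, -μ;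
     a1, 1,  -μ,  a5, -μ,  a6, -μ,  a7;
     μ, -μ,   1,   μ,  a8, -μ,  a9, a10;
     a2, a5,  μ,   1, a11, a12,  μ,   μ;
     a3, -μ, a8, a11,   1,   μ,  μ,  -μ;
     -μ, a6, -μ, a12,   μ,   1,  μ, a13;
     a4, -μ, a9,   μ,   μ,   μ,  1, a14;
     -μ, a7, a10,  μ,  -μ, a13, a14,  1]

theorem step5_det_fin_four (M : Matrix (Fin 4) (Fin 4) ℝ) :
    M.det =
      M 0 0 * (M 1 1*(M 2 2*M 3 3 - M 2 3*M 3 2) - M 1 2*(M 2 1*M 3 3 - M 2 3*M 3 1) + M 1 3*(M 2 1*M 3 2 - M 2 2*M 3 1))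
    - M 0 1 * (M 1 0*(M 2 2*M 3 3 - M 2 3*M 3 2) - M 1 2*(M 2 0*M 3 3 - M 2 3*M 3 0) + M 1 3*(M 2 0*M 3 2 - M 2 2*M 3 0))
    + M 0 2 * (M 1 0*(M 2 1*M 3 3 - M 2 3*M 3 1) - M 1 1*(M 2 0*M 3 3 - M 2 3*M 3 0) + M 1 3*(M 2 0*M 3 1 - M 2 1*M 3 0))
    - M 0 3 * (M 1 0*(M 2 1*M 3 2 - M 2 2*M 3 1) - M 1 1*(M 2 0*M 3 2 - M 2 2*M 3 0) + M 1 2*(M 2 0*M 3 1 - M 2 1*M 3 0)) := by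
  have h1 : (Fin.succ 2 : Fin 4) = 3 := rfl
  have h2 : (Fin.castSucc 2 : Fin 4) = 2 := rfl
  rw [Matrix.det_succ_row_zero]
  simp [Fin.sum_univ_succ, Matrix.det_fin_three, Fin.succAbove_zero, Fin.succ_succAbove_zero, Fin.succ_succAbove_succ, h1, h2, show Fin.succAbove (2:Fin 4) 2 = 3 from rfl, show Fin.succAbove (3:Fin 4) 2 = 2 from rfl, show Fin.succAbove (1:Fin 4) 2 = 3 from rfl]
  ring

lemma step5_det_submatrix_eq_zero {A : Matrix (Fin 8) (Fin 8) ℝ} (hA : A.rank ≤ 3)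
    (r c : Fin 4 → Fin 8) : (A.submatrix r c).det = 0 := by
  by_contra hdet
  have hU : IsUnit (A.submatrix r c) :=
    (Matrix.isUnit_iff_isUnit_det _).mpr (Ne.isUnit hdet)
  have hli : LinearIndependent ℝ (fun j => (A.submatrix r c).transpose j) :=
    Matrix.linearIndependent_cols_iff_isUnit.mpr hU
  have hli2 : LinearIndependent ℝ (fun j => A.transpose (c j)) := by
    have he : (fun j => (A.submatrix r c).transpose j)
        = (LinearMap.funLeft ℝ ℝ r) ∘ (fun j => A.transpose (c j)) := by
      ext j i; rfl
    rw [he] at hli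
    exact hli.of_comp _
  set W := Submodule.span ℝ (Set.range A.transpose) with hW
  have hmem : ∀ j, A.transpose (c j) ∈ W := fun j => Submodule.subset_span ⟨c j, rfl⟩
  have hv : LinearIndependent ℝ (fun j => (⟨A.transpose (c j), hmem j⟩ : W)) := by
    have he : (fun j => A.transpose (c j))
        = W.subtype ∘ (fun j => (⟨A.transpose (c j), hmem j⟩ : W)) := rfl
    rw [he] at hli2
    exact hli2.of_comp _
  have h4 : (4 : ℕ) ≤ Module.finrank ℝ W := by
    simpa using hv.fintype_card_le_finrank
  have hr := A.rank_eq_finrank_span_cols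
  rw [show Set.range A.col = Set.range A.transpose from rfl, ← hW] at hr
  omega

set_option maxHeartbeats 1600000 in
/-- **Step 5.** Under the rank-3 and coherence conditions on `G`, `a₁₂ = a₆` and `a₈ < 0`. -/
theorem step5
    (μ a1 a2 a3 a4 a5 a6 a7 a8 a9 a10 a11 a12 a13 a14 : ℝ)
    (hrank : (packingGram μ a1 a2 a3 a4 a5 a6 a7 a8 a9 a10 a11 a12 a13 a14).rank ≤ 3)
    (hμ1 : (0.6 : ℝ) ≤ μ) (hμ2 : μ ≤ 0.64759)
    (h1 : |a1| < μ) (h2 : |a2| < μ) (h3 : |a3| < μ) (h4 : |a4| < μ) (h5 : |a5| < μ)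
    (h6 : |a6| < μ) (h7 : |a7| < μ) (h8 : |a8| < μ) (h9 : |a9| < μ) (h10 : |a10| < μ)
    (h11 : |a11| < μ) (h12 : |a12| < μ) (h13 : |a13| < μ) (h14 : |a14| < μ) :
    a12 = a6 ∧ a8 < 0 := by
  obtain ⟨h5l, h5r⟩ := abs_lt.mp h5
  obtain ⟨h6l, h6r⟩ := abs_lt.mp h6
  obtain ⟨h8l, h8r⟩ := abs_lt.mp h8
  obtain ⟨h9l, h9r⟩ := abs_lt.mp h9
  obtain ⟨h12l, h12r⟩ := abs_lt.mp h12
  have hμpos : (0:ℝ) < μ := by linarith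
  have hμlt1 : μ < 1 := by linarith
  -- minor on rows/cols {2,5,6,7} (1-indexed)
  have hfac1 : (1+a6)*((1-μ)*((1+μ-4*μ^2) - a6*(1+μ))) = 0 := by
    have h := step5_det_submatrix_eq_zero hrank ![1,4,5,6] ![1,4,5,6]
    have hm : (packingGram μ a1 a2 a3 a4 a5 a6 a7 a8 a9 a10 a11 a12 a13 a14).submatrix
        ![1,4,5,6] ![1,4,5,6] = !![1,-μ,a6,-μ; -μ,1,μ,μ; a6,μ,1,μ; -μ,μ,μ,1] := by
      ext i j; fin_cases i <;> fin_cases j <;> rfl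
    rw [hm, step5_det_fin_four] at h
    norm_num [Matrix.vecHead, Matrix.vecTail, Function.comp, Matrix.cons_val_two, Matrix.cons_val_three] at h
    linear_combination h
  have hA' : a6*(1+μ) = 1+μ-4*μ^2 := by
    rcases mul_eq_zero.mp hfac1 with h | h
    · exfalso; linarith only [h, h6l, hμ2]
    rcases mul_eq_zero.mp h with h' | h'
    · exfalso; linarith only [h', hμ2]
    · linarith only [h']
  -- minor on rows/cols {2,3,6,7}
  have hB : (1-a6^2)*(1-a9^2) = 4*μ^2*(1-μ^2) := by
    have h := step5_det_submatrix_eq_zero hrank ![1,2,5,6] ![1,2,5,6]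
    have hm : (packingGram μ a1 a2 a3 a4 a5 a6 a7 a8 a9 a10 a11 a12 a13 a14).submatrix
        ![1,2,5,6] ![1,2,5,6] = !![1,-μ,a6,-μ; -μ,1,-μ,a9; a6,-μ,1,μ; -μ,a9,μ,1] := by
      ext i j; fin_cases i <;> fin_cases j <;> rfl
    rw [hm, step5_det_fin_four] at h
    norm_num [Matrix.vecHead, Matrix.vecTail, Function.comp, Matrix.cons_val_two, Matrix.cons_val_three] at h
    linear_combination h
  -- minor on rows/cols {3,4,6,7}
  have hB' : (1-a12^2)*(1-a9^2) = 4*μ^2*(1-μ^2) := by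
    have h := step5_det_submatrix_eq_zero hrank ![2,3,5,6] ![2,3,5,6]
    have hm : (packingGram μ a1 a2 a3 a4 a5 a6 a7 a8 a9 a10 a11 a12 a13 a14).submatrix
        ![2,3,5,6] ![2,3,5,6] = !![1,μ,-μ,a9; μ,1,a12,μ; -μ,a12,1,μ; a9,μ,μ,1] := by
      ext i j; fin_cases i <;> fin_cases j <;> rfl
    rw [hm, step5_det_fin_four] at h
    norm_num [Matrix.vecHead, Matrix.vecTail, Function.comp, Matrix.cons_val_two, Matrix.cons_val_three] at h
    linear_combination h
  -- minor on rows/cols {3,5,6,7}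
  have hP5 : 1 - a9^2 - a8^2 + 2*μ*a8*a9 - 4*μ^2 - 2*μ^2*a9 + μ^2*a9^2 - 2*μ^2*a8
      - 2*μ^2*a8*a9 + μ^2*a8^2 + 2*μ^3 + 2*μ^3*a9 + 2*μ^3*a8 + μ^4 = 0 := by
    have h := step5_det_submatrix_eq_zero hrank ![2,4,5,6] ![2,4,5,6]
    have hm : (packingGram μ a1 a2 a3 a4 a5 a6 a7 a8 a9 a10 a11 a12 a13 a14).submatrix
        ![2,4,5,6] ![2,4,5,6] = !![1,a8,-μ,a9; a8,1,μ,μ; -μ,μ,1,μ; a9,μ,μ,1] := by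
      ext i j; fin_cases i <;> fin_cases j <;> rfl
    rw [hm, step5_det_fin_four] at h
    norm_num [Matrix.vecHead, Matrix.vecTail, Function.comp, Matrix.cons_val_two, Matrix.cons_val_three] at h
    linear_combination h
  -- minor on rows/cols {2,3,5,7}
  have hP6 : 1 - a9^2 - a8^2 + 2*μ*a8*a9 - 4*μ^2 + 2*μ^2*a9 + μ^2*a9^2 + 2*μ^2*a8
      - 2*μ^2*a8*a9 + μ^2*a8^2 + 2*μ^3 - 2*μ^3*a9 - 2*μ^3*a8 + μ^4 = 0 := by
    have h := step5_det_submatrix_eq_zero hrank ![1,2,4,6] ![1,2,4,6]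
    have hm : (packingGram μ a1 a2 a3 a4 a5 a6 a7 a8 a9 a10 a11 a12 a13 a14).submatrix
        ![1,2,4,6] ![1,2,4,6] = !![1,-μ,-μ,-μ; -μ,1,a8,a9; -μ,a8,1,μ; -μ,a9,μ,1] := by
      ext i j; fin_cases i <;> fin_cases j <;> rfl
    rw [hm, step5_det_fin_four] at h
    norm_num [Matrix.vecHead, Matrix.vecTail, Function.comp, Matrix.cons_val_two, Matrix.cons_val_three] at h
    linear_combination h
  -- minor on rows/cols {2,3,4,7}
  have hfac7 : (1-a9)*((1+a5)*((1+a9)*(1-a5)-4*μ^2)) = 0 := by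
    have h := step5_det_submatrix_eq_zero hrank ![1,2,3,6] ![1,2,3,6]
    have hm : (packingGram μ a1 a2 a3 a4 a5 a6 a7 a8 a9 a10 a11 a12 a13 a14).submatrix
        ![1,2,3,6] ![1,2,3,6] = !![1,-μ,a5,-μ; -μ,1,μ,a9; a5,μ,1,μ; -μ,a9,μ,1] := by
      ext i j; fin_cases i <;> fin_cases j <;> rfl
    rw [hm, step5_det_fin_four] at h
    norm_num [Matrix.vecHead, Matrix.vecTail, Function.comp, Matrix.cons_val_two, Matrix.cons_val_three] at h
    linear_combination h
  -- a9 = -a8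
  have hu : a8 + a9 = 0 := by
    have hu0 : (4*μ^2*(1-μ))*(a8+a9) = 0 := by linear_combination hP6 - hP5
    rcases mul_eq_zero.mp hu0 with h | h
    · exfalso
      have hx : (0:ℝ) < 4*μ^2*(1-μ) :=
        mul_pos (mul_pos (by norm_num) (pow_pos hμpos 2)) (by linarith only [hμlt1])
      exact (ne_of_gt hx) h
    · exact h
  have hr : 2*(1+2*μ)*(1-μ)*a8^2 = μ^4+2*μ^3-4*μ^2+1 := by
    linear_combination (-1)*hP5 + (-a9 + a8 + 2*μ*a8 - 2*μ^2 + μ^2*a9 - 3*μ^2*a8 + 2*μ^3)*hu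
  have h57 : (1+a9)*(1-a5) = 4*μ^2 := by
    rcases mul_eq_zero.mp hfac7 with h | h
    · exfalso; linarith only [h, h9r, hμ2]
    rcases mul_eq_zero.mp h with h' | h'
    · exfalso; linarith only [h', h5l, hμ2]
    · linarith only [h']
  -- Part (b): a8 < 0
  have ha8 : a8 < 0 := by
    by_contra hcon
    push_neg at hcon
    have h1a8 : (1-a8)*(1-a5) = 4*μ^2 := by linear_combination h57 - (1-a5)*hu
    have hstep : a8*(1+μ) < 1+μ-4*μ^2 := by
      nlinarith only [mul_pos (show (0:ℝ) < 1-a8 by linarith only [h8r, hμ2])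
        (show (0:ℝ) < (1+μ)-(1-a5) by linarith only [h5l]), h1a8]
    have ha8μ : 0 ≤ a8*(1+μ) := mul_nonneg hcon (by linarith only [hμpos])
    have h2' : (a8*(1+μ))^2 < (1+μ-4*μ^2)^2 := by
      nlinarith only [mul_pos (sub_pos.mpr hstep)
        (show (0:ℝ) < (1+μ-4*μ^2)+a8*(1+μ) by linarith only [hstep, ha8μ])]
    have hχ : 0 < (μ^4+2*μ^3-4*μ^2+1)*(1+μ)^2 - 2*(1+2*μ)*(1-μ)*(1+μ-4*μ^2)^2 := by
      nlinarith only [hμ1, hμ2,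
        mul_nonneg (sub_nonneg.2 hμ1) (sub_nonneg.2 hμ2), sq_nonneg (μ-0.6),
        sq_nonneg (μ-0.64759), sq_nonneg μ,
        mul_nonneg (mul_nonneg (sub_nonneg.2 hμ1) (sub_nonneg.2 hμ2)) (sub_nonneg.2 hμ1),
        mul_nonneg (mul_nonneg (sub_nonneg.2 hμ1) (sub_nonneg.2 hμ2)) (sub_nonneg.2 hμ2)]
    have hpos2 : (0:ℝ) < 2*(1+2*μ)*(1-μ) :=
      mul_pos (mul_pos (by norm_num) (by linarith only [hμpos])) (by linarith only [hμlt1])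
    have h3' := mul_lt_mul_of_pos_left h2' hpos2
    have h4' : 2*(1+2*μ)*(1-μ)*(a8*(1+μ))^2 = (μ^4+2*μ^3-4*μ^2+1)*(1+μ)^2 := by
      linear_combination (1+μ)^2 * hr
    linarith only [h3', h4', hχ]
  -- Part (a): a12 = a6
  have ha12 : a12 = a6 := by
    have hsq : (a12-a6)*((a12+a6)*(1-a9^2)) = 0 := by linear_combination hB - hB'
    rcases mul_eq_zero.mp hsq with h | h
    · linarith only [h]
    rcases mul_eq_zero.mp h with h612 | h'
    · -- case a12 = -a6
      have he : a12 = -a6 := by linarith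
      subst he
      -- minor on rows {3,4,6,7}, cols {2,4,6,7}
      have hfac4 : μ*((1+a5)*(a9*(1+a6)-(1-a6-2*μ^2))) = 0 := by
        have h := step5_det_submatrix_eq_zero hrank ![2,3,5,6] ![1,3,5,6]
        have hm : (packingGram μ a1 a2 a3 a4 a5 a6 a7 a8 a9 a10 a11 (-a6) a13 a14).submatrix
            ![2,3,5,6] ![1,3,5,6]
            = !![-μ,μ,-μ,a9; a5,1,-a6,μ; a6,-a6,1,μ; -μ,μ,μ,1] := by
          ext i j; fin_cases i <;> fin_cases j <;> rfl
        rw [hm, step5_det_fin_four] at h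
        norm_num [Matrix.vecHead, Matrix.vecTail, Function.comp, Matrix.cons_val_two, Matrix.cons_val_three] at h
        linear_combination h
      have hC0 : a9*(1+a6) = 1-a6-2*μ^2 := by
        rcases mul_eq_zero.mp hfac4 with h | h
        · exfalso; linarith only [h, hμpos]
        rcases mul_eq_zero.mp h with h' | h'
        · exfalso; linarith only [h', h5l, hμ2]
        · linarith only [h']
      have hC1 : (a9*(1+2*μ))*(2*(1-μ)) = μ^2*(2*(1-μ)) := by
        linear_combination (1+μ)*hC0 - (a9+1)*hA'
      have hC : a9*(1+2*μ) = μ^2 :=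
        mul_right_cancel₀ (ne_of_gt (show (0:ℝ) < 2*(1-μ) by linarith only [hμlt1])) hC1
      have hkey : (1+μ-4*μ^2)*((1+μ)^2*(4*μ^2*(1-μ)*(1+2*μ))) = 0 := by
        linear_combination ((1+μ)^2*(1+2*μ)^2)*hB
          + (a6*(1+μ)+(1+μ-4*μ^2))*((1+2*μ)^2-(a9*(1+2*μ))^2)*hA'
          + (8*μ^2*(1-μ)*(1+2*μ))*((a9*(1+2*μ))+μ^2)*hC
      have h4m : 1+μ-4*μ^2 = 0 := by
        rcases mul_eq_zero.mp hkey with h | h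
        · exact h
        · exfalso
          have hx : (0:ℝ) < (1+μ)^2*(4*μ^2*(1-μ)*(1+2*μ)) := by
            have c1 : (0:ℝ) < (1+μ)^2 := by positivity
            have c2 : (0:ℝ) < 4*μ^2 := by positivity
            have c3 : (0:ℝ) < 1-μ := by linarith only [hμlt1]
            have c4 : (0:ℝ) < 1+2*μ := by linarith only [hμpos]
            exact mul_pos c1 (mul_pos (mul_pos c2 c3) c4)
          linarith only [hx, h]
      have h60 : a6*(1+μ) = 0 := by linarith only [hA', h4m]
      rcases mul_eq_zero.mp h60 with h0 | h0
      · rw [h0]; ring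
      · exfalso; linarith only [h0, hμpos]
    · exfalso
      have hμsq : μ^2 ≤ (0.64759:ℝ)^2 := by nlinarith only [hμ2, hμ1]
      have hq : (0:ℝ) < (μ - a9)*(μ + a9) :=
        mul_pos (by linarith only [h9r]) (by linarith only [h9l])
      nlinarith only [hq, hμsq, h']
  exact ⟨ha12, ha8⟩
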